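/- Let D be a subcomplex consisting of 2-dimensional facets of the clique complex of a chordal, claw-free graph G with Koszul binomial edge ideal, such that D is connected in codimension 1 and Δ(G) contains no induced copy of the 'two triangles sharing vertices' configuration of the non-Koszul example. Then the 1-skeleton of D is a 2-dimensional line graph, i.e., its facets can be labeled {1,2,3},{2,3,4},...,{m−1,m,m+1},{m,m+1,m+2}. -/

import Mathlib

open MvPolynomial

set_option synthInstance.maxHeartbeats 1000000
set_option maxHeartbeats 1000000

/-- The quotient `S/I` of a polynomial ring by a (homogeneous) ideal is *Koszul* if the
residue field `K = (S/I)/m` admits a free resolution whose differentials are given by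
matrices all of whose entries are (images of) linear forms: the image of the first
differential is the graded maximal ideal `m` (generated by the variables), and the
complex is exact. -/
def IsKoszulQuot {K : Type*} [Field K] {σ : Type*} (I : Ideal (MvPolynomial σ K)) : Prop :=
  ∃ (b : ℕ → ℕ) (M : ∀ i, Matrix (Fin (b i)) (Fin (b (i + 1))) (MvPolynomial σ K ⧸ I)),
    b 0 = 1 ∧
    (∀ i k l, M i k l ∈ (Ideal.Quotient.mk I) '' {p : MvPolynomial σ K | p.IsHomogeneous 1}) ∧
    LinearMap.range (Matrix.toLin' (M 0)) =
      Submodule.pi Set.univ (fun _ : Fin (b 0) =>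
        (Ideal.map (Ideal.Quotient.mk I)
          (Ideal.span (Set.range (X : σ → MvPolynomial σ K))) :
            Ideal (MvPolynomial σ K ⧸ I))) ∧
    ∀ i, LinearMap.range (Matrix.toLin' (M (i + 1))) = LinearMap.ker (Matrix.toLin' (M i))

/-- The binomial edge ideal of a simple graph `G` on vertex set `V`, inside
`S = K[x_v, y_v : v ∈ V]`, where `x_v = X (Sum.inl v)` and `y_v = X (Sum.inr v)`:
it is generated by the binomials `x_i y_j - x_j y_i` for edges `{i,j}` of `G`. -/
noncomputable def binomialEdgeIdeal (K : Type*) [Field K] {V : Type*} (G : SimpleGraph V) :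
    Ideal (MvPolynomial (V ⊕ V) K) :=
  Ideal.span {f | ∃ i j, G.Adj i j ∧
    f = X (Sum.inl i) * X (Sum.inr j) - X (Sum.inl j) * X (Sum.inr i)}

/-- A graph `G` is *Koszul* (with respect to `K`) if `S/J_G` is a Koszul algebra. -/
def GraphKoszul (K : Type*) [Field K] {V : Type*} (G : SimpleGraph V) : Prop :=
  IsKoszulQuot (binomialEdgeIdeal K G)

/-- `F` is a maximal clique of `G` (as a finite set of vertices). -/
def IsMaximalCliqueF {V : Type*} (G : SimpleGraph V) (F : Finset V) : Prop :=
  G.IsClique ↑F ∧ ∀ F' : Finset V, G.IsClique ↑F' → F ⊆ F' → F' = F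

/-- `G` is chordal: every cycle of length at least 4 has a chord. -/
def IsChordal {V : Type*} (G : SimpleGraph V) : Prop :=
  ∀ ⦃v : V⦄ (p : G.Walk v v), p.IsCycle → 4 ≤ p.length →
    ∃ a b, a ∈ p.support ∧ b ∈ p.support ∧ G.Adj a b ∧ s(a, b) ∉ p.edges

/-- `G` is claw free. -/
def ClawFree {V : Type*} (G : SimpleGraph V) : Prop :=
  ¬ ∃ a b c d : V, b ≠ c ∧ b ≠ d ∧ c ≠ d ∧
    G.Adj a b ∧ G.Adj a c ∧ G.Adj a d ∧ ¬ G.Adj b c ∧ ¬ G.Adj b d ∧ ¬ G.Adj c d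

/-- A family `D` of facets is connected in codimension 1: any two facets of `D` are
joined by a sequence of facets of `D` in which consecutive members meet in a set of
cardinality 2. -/
def Codim1Conn {V : Type*} [DecidableEq V] (D : Set (Finset V)) : Prop :=
  ∀ F ∈ D, ∀ F' ∈ D, ∃ (t : ℕ) (c : Fin (t + 1) → Finset V),
    c 0 = F ∧ c (Fin.last t) = F' ∧ (∀ k, c k ∈ D) ∧
    ∀ k : Fin t, (c k.castSucc ∩ c k.succ).card = 2

/-- The 6-vertex configuration of three triangles from the non-Koszul example
(Figure 3): triangles `{1,2,4}`, `{2,3,5}`, `{4,5,6}` pairwise sharing a vertex. -/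
def threeTriangles : SimpleGraph (Fin 6) :=
  SimpleGraph.fromRel fun a b =>
    (a, b) ∈ ([(0, 1), (0, 3), (1, 3), (1, 2), (1, 4), (2, 4), (3, 4), (3, 5), (4, 5)] :
      List (Fin 6 × Fin 6))

/-- `G` contains no induced subgraph isomorphic to `H`. -/
def NoInducedCopy {V W : Type*} (G : SimpleGraph V) (H : SimpleGraph W) : Prop :=
  ¬ ∃ w : W ↪ V, ∀ a b, G.Adj (w a) (w b) ↔ H.Adj a b


namespace Stmt17

section CycleTools
variable {V : Type*} {G : SimpleGraph V}

lemma exists_straight_walk (G : SimpleGraph V) (c : ℕ → V) :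
    ∀ n, (∀ i, i < n → G.Adj (c i) (c (i+1))) →
    ∃ w : G.Walk (c 0) (c n), w.support = (List.range (n+1)).map c ∧
      w.edges = (List.range n).map (fun i => s(c i, c (i+1))) ∧ w.length = n := by
  intro n
  induction n with
  | zero =>
    intro _
    exact ⟨SimpleGraph.Walk.nil, by simp [List.range_succ], by simp, by simp⟩
  | succ n ih =>
    intro h
    obtain ⟨w, hs, he, hl⟩ := ih (fun i hi => h i (by omega))
    refine ⟨w.concat (h n (by omega)), ?_, ?_, ?_⟩
    · rw [SimpleGraph.Walk.support_concat, hs,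
        List.range_succ (n := n+1), List.map_append]
      simp
    · rw [SimpleGraph.Walk.edges_concat, he,
        List.range_succ (n := n), List.map_append]
      simp
    · rw [SimpleGraph.Walk.length_concat, hl]

lemma no_chordless_cycle (hch : IsChordal G) (n : ℕ) (hn : 4 ≤ n) (c : ℕ → V)
    (hadj : ∀ i, i + 1 < n → G.Adj (c i) (c (i+1)))
    (hclose : G.Adj (c (n-1)) (c 0))
    (hinj : ∀ i j, i < j → j < n → c i ≠ c j)
    (hnon : ∀ i j, i + 1 < j → j < n → ¬(i = 0 ∧ j = n-1) → ¬ G.Adj (c i) (c j)) :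
    False := by
  obtain ⟨w, hs, he, hl⟩ := exists_straight_walk G c (n-1) (fun i hi => hadj i (by omega))
  have hpath : w.IsPath := by
    rw [SimpleGraph.Walk.isPath_def, hs]
    refine List.Nodup.map_on ?_ List.nodup_range
    intro x hx y hy hxy
    simp only [List.mem_range] at hx hy
    by_contra hne
    rcases Nat.lt_or_ge x y with h | h
    · exact hinj x y h (by omega) hxy
    · exact hinj y x (by omega) (by omega) hxy.symm
  set cyc := SimpleGraph.Walk.cons hclose w with hcyc_def
  have hcyc : cyc.IsCycle := by
    rw [SimpleGraph.Walk.cons_isCycle_iff]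
    refine ⟨hpath, ?_⟩
    rw [he]
    intro hmem
    simp only [List.mem_map, List.mem_range] at hmem
    obtain ⟨i, hi, heq⟩ := hmem
    rw [Sym2.eq_iff] at heq
    rcases heq with ⟨h1, h2⟩ | ⟨h1, h2⟩
    · exact hinj 0 (i+1) (by omega) (by omega) h2.symm
    · rcases Nat.eq_zero_or_pos i with rfl | hpos
      · exact hinj 1 (n-1) (by omega) (by omega) h2
      · exact hinj 0 i (by omega) (by omega) h1.symm
  have hlen : 4 ≤ cyc.length := by
    rw [hcyc_def, SimpleGraph.Walk.length_cons, hl]; omega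
  obtain ⟨a, b, ha, hb, hab, hnedge⟩ := hch cyc hcyc hlen
  have hsup : ∀ x, x ∈ cyc.support → ∃ i, i < n ∧ x = c i := by
    intro x hx
    rw [hcyc_def, SimpleGraph.Walk.support_cons, List.mem_cons, hs] at hx
    rcases hx with rfl | hx
    · exact ⟨n-1, by omega, rfl⟩
    · simp only [List.mem_map, List.mem_range] at hx
      obtain ⟨i, hi, rfl⟩ := hx
      exact ⟨i, by omega, rfl⟩
  obtain ⟨i, hi, rfl⟩ := hsup a ha
  obtain ⟨j, hj, rfl⟩ := hsup b hb
  have hedges : ∀ i j, i < j → j < n → G.Adj (c i) (c j) → s(c i, c j) ∈ cyc.edges := by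
    intro i j hij hjn hadj'
    have : j = i + 1 ∨ (i = 0 ∧ j = n - 1) := by
      by_contra hcon
      push_neg at hcon
      rcases Nat.lt_or_ge (i+1) j with h | h
      · exact hnon i j h hjn (fun h0 => (hcon.2 h0.1) h0.2) hadj'
      · omega
    rw [hcyc_def, SimpleGraph.Walk.edges_cons, List.mem_cons, he]
    rcases this with rfl | ⟨rfl, rfl⟩
    · right
      simp only [List.mem_map, List.mem_range]
      exact ⟨i, by omega, rfl⟩
    · left
      rw [Sym2.eq_iff]
      right; exact ⟨rfl, rfl⟩
  have hij : i ≠ j := by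
    intro h; subst h; exact G.irrefl hab
  rcases Nat.lt_or_ge i j with h | h
  · exact hnedge (hedges i j h hj hab)
  · have := hedges j i (by omega) hi hab.symm
    rw [Sym2.eq_swap] at this
    exact hnedge this


lemma claw (hcf : ClawFree G) {a b c d : V} (hab : G.Adj a b) (hac : G.Adj a c)
    (had : G.Adj a d) (h1 : ¬ G.Adj b c) (h2 : ¬ G.Adj b d) (h3 : ¬ G.Adj c d)
    (n1 : b ≠ c) (n2 : b ≠ d) (n3 : c ≠ d) : False :=
  hcf ⟨a, b, c, d, n1, n2, n3, hab, hac, had, h1, h2, h3⟩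

lemma cycle4 (hch : IsChordal G) {a b c d : V}
    (hab : G.Adj a b) (hbc : G.Adj b c) (hcd : G.Adj c d) (hda : G.Adj d a)
    (hac : ¬ G.Adj a c) (hbd : ¬ G.Adj b d) (hac' : a ≠ c) (hbd' : b ≠ d) : False := by
  apply no_chordless_cycle hch 4 (by norm_num)
    (fun i => if i = 0 then a else if i = 1 then b else if i = 2 then c else d)
  · intro i hi
    have hi' : i < 3 := by omega
    interval_cases i <;> simpa
  · simpa
  · intro i j hij hj
    have hi4 : i < 4 := by omega
    interval_cases i <;> interval_cases j <;> simp_all <;>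
      first
      | exact hab.ne
      | exact hbc.ne
      | exact hcd.ne
      | exact hda.ne'
      | exact fun h => hac h
      | exact fun h => hbd h
  · intro i j hij hj hne
    have hi4 : i < 4 := by omega
    interval_cases i <;> interval_cases j <;> simp_all <;>
      first
      | exact fun h => hac h
      | exact fun h => hbd h

lemma cycle5 (hch : IsChordal G) {a b c d e : V}
    (hab : G.Adj a b) (hbc : G.Adj b c) (hcd : G.Adj c d) (hde : G.Adj d e)
    (hea : G.Adj e a)
    (hac : ¬ G.Adj a c) (had : ¬ G.Adj a d) (hbd : ¬ G.Adj b d) (hbe : ¬ G.Adj b e)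
    (hce : ¬ G.Adj c e)
    (nac : a ≠ c) (nad : a ≠ d) (nbd : b ≠ d) (nbe : b ≠ e) (nce : c ≠ e) : False := by
  apply no_chordless_cycle hch 5 (by norm_num)
    (fun i => if i = 0 then a else if i = 1 then b else if i = 2 then c else
      if i = 3 then d else e)
  · intro i hi
    have hi' : i < 4 := by omega
    interval_cases i <;> simpa
  · simpa
  · intro i j hij hj
    have hi5 : i < 5 := by omega
    interval_cases i <;> interval_cases j <;> simp_all <;>
      first
      | exact hab.ne
      | exact hbc.ne
      | exact hcd.ne
      | exact hde.ne
      | exact hea.ne'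
  · intro i j hij hj hne
    have hi5 : i < 5 := by omega
    interval_cases i <;> interval_cases j <;> simp_all <;>
      first
      | exact fun h => hac h
      | exact fun h => had h
      | exact fun h => hbd h
      | exact fun h => hbe h
      | exact fun h => hce h


/-- a chordless cycle through `w` and an arithmetic-progression path. -/
lemma stepTwoCycle (hch : IsChordal G) (q : ℕ → V) (w : V) (a t : ℕ) (ht : 2 ≤ t)
    (hwa : G.Adj w (q a))
    (hwb : G.Adj (q (a + 2*t)) w)
    (hstep : ∀ k, k < t → G.Adj (q (a + 2*k)) (q (a + 2*k + 2)))
    (hwmid : ∀ k, 1 ≤ k → k < t → ¬ G.Adj w (q (a + 2*k)))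
    (hqq : ∀ k l, k + 2 ≤ l → l ≤ t → ¬ G.Adj (q (a + 2*k)) (q (a + 2*l)))
    (hwq : ∀ k, k ≤ t → w ≠ q (a + 2*k))
    (hqinj : ∀ k l, k < l → l ≤ t → q (a + 2*k) ≠ q (a + 2*l)) : False := by
  apply no_chordless_cycle hch (t+2) (by omega)
    (fun r => if r = 0 then w else q (a + 2*(r-1)))
  · intro i hi
    rcases Nat.eq_zero_or_pos i with rfl | hpos
    · simpa using hwa
    · have h1 : i ≠ 0 := by omega
      have h2 : i + 1 ≠ 0 := by omega
      simp only [if_neg h1, if_neg h2]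
      have hs := hstep (i-1) (by omega)
      have e1 : a + 2*(i-1) + 2 = a + 2*(i+1-1) := by omega
      rw [e1] at hs
      exact hs
  · have h1 : t + 2 - 1 = t + 1 := by omega
    rw [h1]
    have h2 : t + 1 ≠ 0 := by omega
    simp only [if_neg h2, if_pos rfl]
    have e : t + 1 - 1 = t := by omega
    rw [e]
    exact hwb
  · intro i j hij hj
    rcases Nat.eq_zero_or_pos i with rfl | hpos
    · have hj0 : j ≠ 0 := by omega
      simp only [if_pos rfl, if_neg hj0]
      exact hwq (j-1) (by omega)
    · have h1 : i ≠ 0 := by omega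
      have h2 : j ≠ 0 := by omega
      simp only [if_neg h1, if_neg h2]
      exact hqinj (i-1) (j-1) (by omega) (by omega)
  · intro i j hij hj hne
    rcases Nat.eq_zero_or_pos i with rfl | hpos
    · have hj0 : j ≠ 0 := by omega
      have hjt : j ≠ t + 1 := fun h => hne ⟨rfl, by omega⟩
      simp only [if_pos rfl, if_neg hj0]
      exact hwmid (j-1) (by omega) (by omega)
    · have h1 : i ≠ 0 := by omega
      have h2 : j ≠ 0 := by omega
      simp only [if_neg h1, if_neg h2]
      exact hqq (i-1) (j-1) (by omega) (by omega)


end CycleTools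

section CliqueTools
variable {V : Type*} [DecidableEq V] {G : SimpleGraph V}

/-- a maximal clique admits no external vertex adjacent to all of it -/
lemma not_adj_all {F : Finset V} (hmax : IsMaximalCliqueF G F) {v : V} (hv : v ∉ F)
    (h : ∀ x ∈ F, G.Adj v x) : False := by
  have hcl : G.IsClique ↑(insert v F) := by
    rw [Finset.coe_insert]
    exact hmax.1.insert (fun b hb _ => h b hb)
  have := hmax.2 _ hcl (Finset.subset_insert v F)
  exact hv (this ▸ Finset.mem_insert_self v F)

lemma triple_distinct {a b c : V} (h : ({a, b, c} : Finset V).card = 3) :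
    a ≠ b ∧ a ≠ c ∧ b ≠ c := by
  refine ⟨?_, ?_, ?_⟩ <;> intro he
  · rw [he] at h
    have h2 : ({b, b, c} : Finset V) = {b, c} := by ext t; simp
    rw [h2] at h
    have := Finset.card_insert_le b ({c} : Finset V)
    simp only [Finset.card_singleton] at this
    omega
  · rw [he] at h
    have h2 : ({c, b, c} : Finset V) = {c, b} := by ext t; simp; tauto
    rw [h2] at h
    have := Finset.card_insert_le c ({b} : Finset V)
    simp only [Finset.card_singleton] at this
    omega
  · rw [he] at h
    have h2 : ({a, c, c} : Finset V) = {a, c} := by ext t; simp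
    rw [h2] at h
    have := Finset.card_insert_le a ({c} : Finset V)
    simp only [Finset.card_singleton] at this
    omega

lemma pair_eq {s : Finset V} {a b : V} (h2 : s.card = 2) (ha : a ∈ s) (hb : b ∈ s)
    (hne : a ≠ b) : s = {a, b} := by
  symm
  apply Finset.eq_of_subset_of_card_le
  · intro x hx
    simp only [Finset.mem_insert, Finset.mem_singleton] at hx
    rcases hx with rfl | rfl <;> assumption
  · rw [h2, Finset.card_pair hne]

lemma pair_rest {s : Finset V} {v : V} (h2 : s.card = 2) (hv : v ∈ s) :
    ∃ a, a ≠ v ∧ s = {v, a} := by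
  obtain ⟨x, y, hxy, rfl⟩ := Finset.card_eq_two.mp h2
  simp only [Finset.mem_insert, Finset.mem_singleton] at hv
  rcases hv with rfl | rfl
  · exact ⟨y, hxy.symm, rfl⟩
  · exact ⟨x, hxy, Finset.pair_comm x v⟩

lemma two_subset_of_three {e : Finset V} {x y z : V} (hsub : e ⊆ {x, y, z})
    (h2 : e.card = 2) : e = {x, y} ∨ e = {x, z} ∨ e = {y, z} := by
  obtain ⟨a, b, hab, rfl⟩ := Finset.card_eq_two.mp h2
  have ha := hsub (Finset.mem_insert_self a {b})
  have hb := hsub (Finset.mem_insert_of_mem (Finset.mem_singleton_self b))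
  simp only [Finset.mem_insert, Finset.mem_singleton] at ha hb
  rcases ha with rfl | rfl | rfl <;> rcases hb with rfl | rfl | rfl <;>
    first
    | exact absurd rfl hab
    | tauto
    | (left; exact Finset.pair_comm _ _)
    | (right; left; exact Finset.pair_comm _ _)
    | (right; right; exact Finset.pair_comm _ _)

/-- the third vertex of a facet through a given edge -/
lemma third_vertex {F e : Finset V} (h3 : F.card = 3) (h2 : e.card = 2) (hsub : e ⊆ F) :
    ∃ u, u ∉ e ∧ F = insert u e := by
  have hc : (F \ e).card = 1 := by
    rw [Finset.card_sdiff_of_subset hsub, h3, h2]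
  obtain ⟨u, hu⟩ := Finset.card_eq_one.mp hc
  have hu1 : u ∈ F \ e := hu ▸ Finset.mem_singleton_self u
  refine ⟨u, (Finset.mem_sdiff.mp hu1).2, ?_⟩
  have : insert u e ⊆ F := by
    intro t ht
    rcases Finset.mem_insert.mp ht with rfl | ht
    · exact (Finset.mem_sdiff.mp hu1).1
    · exact hsub ht
  symm
  apply Finset.eq_of_subset_of_card_le this
  rw [h3, Finset.card_insert_of_notMem (Finset.mem_sdiff.mp hu1).2, h2]

/-- L1: an edge cannot lie in three distinct facets (claw-free). -/
lemma no_three_facets_on_edge (hcf : ClawFree G)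
    {F1 F2 F3 : Finset V} (h1 : IsMaximalCliqueF G F1 ∧ F1.card = 3)
    (h2 : IsMaximalCliqueF G F2 ∧ F2.card = 3) (h3 : IsMaximalCliqueF G F3 ∧ F3.card = 3)
    (d12 : F1 ≠ F2) (d13 : F1 ≠ F3) (d23 : F2 ≠ F3)
    {a b : V} (hab : a ≠ b) (s1 : {a, b} ⊆ F1) (s2 : {a, b} ⊆ F2) (s3 : {a, b} ⊆ F3) :
    False := by
  have hcard : ({a, b} : Finset V).card = 2 := Finset.card_pair hab
  obtain ⟨u1, hu1, he1⟩ := third_vertex h1.2 hcard s1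
  obtain ⟨u2, hu2, he2⟩ := third_vertex h2.2 hcard s2
  obtain ⟨u3, hu3, he3⟩ := third_vertex h3.2 hcard s3
  simp only [Finset.mem_insert, Finset.mem_singleton, not_or] at hu1 hu2 hu3
  have key : ∀ (F : Finset V) (u : V), IsMaximalCliqueF G F → F = insert u {a, b} →
      u ∉ ({a, b} : Finset V) → G.Adj u a ∧ G.Adj u b := by
    intro F u hm hF hu
    constructor
    · exact hm.1 (by rw [hF]; simp) (by rw [hF]; simp) (by rintro rfl; simp at hu)
    · exact hm.1 (by rw [hF]; simp) (by rw [hF]; simp) (by rintro rfl; simp at hu)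
  obtain ⟨ha1, hb1⟩ := key F1 u1 h1.1 he1 (by simp [hu1.1, hu1.2])
  obtain ⟨ha2, hb2⟩ := key F2 u2 h2.1 he2 (by simp [hu2.1, hu2.2])
  obtain ⟨ha3, hb3⟩ := key F3 u3 h3.1 he3 (by simp [hu3.1, hu3.2])
  have hne : ∀ (F F' : Finset V) (u u' : V), F = insert u {a, b} → F' = insert u' {a, b} →
      F ≠ F' → u ≠ u' := by
    rintro F F' u u' rfl rfl hFF rfl; exact hFF rfl
  have n12 := hne _ _ _ _ he1 he2 d12
  have n13 := hne _ _ _ _ he1 he3 d13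
  have n23 := hne _ _ _ _ he2 he3 d23
  have nadj : ∀ (F : Finset V) (u u' : V), IsMaximalCliqueF G F → F = insert u {a, b} →
      u' ∉ ({a,b} : Finset V) → u' ≠ u → G.Adj u' a → G.Adj u' b → ¬ G.Adj u' u := by
    intro F u u' hm hF hu' huu hA hB hadj'
    have h' : ¬u' = a ∧ ¬u' = b := by simpa using hu'
    have hnm : u' ∉ F := by
      rw [hF]
      simp only [Finset.mem_insert, Finset.mem_singleton]
      tauto
    apply not_adj_all hm (v := u') hnm
    intro x hx
    rw [hF] at hx
    simp only [Finset.mem_insert, Finset.mem_singleton] at hx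
    rcases hx with rfl | rfl | rfl
    · exact hadj'
    · exact hA
    · exact hB
  have n12' := nadj F1 u1 u2 h1.1 he1 (by simp [hu2.1, hu2.2]) n12.symm ha2 hb2
  have n13' := nadj F1 u1 u3 h1.1 he1 (by simp [hu3.1, hu3.2]) n13.symm ha3 hb3
  have n23' := nadj F2 u2 u3 h2.1 he2 (by simp [hu3.1, hu3.2]) n23.symm ha3 hb3
  exact claw hcf ha1.symm ha2.symm ha3.symm
    (fun h => n12' h.symm) (fun h => n13' h.symm) (fun h => n23' h.symm) n12 n13 n23


/-- core of the branching lemma: explicit labels -/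
lemma branch_core (hch : IsChordal G) (hcf : ClawFree G)
    (hno : NoInducedCopy G threeTriangles) (x y z : V) {F A B C : Finset V}
    (hFm : IsMaximalCliqueF G F) (hF3 : F.card = 3)
    (hAm : IsMaximalCliqueF G A) (hA3 : A.card = 3)
    (hBm : IsMaximalCliqueF G B) (hB3 : B.card = 3)
    (hCm : IsMaximalCliqueF G C) (hC3 : C.card = 3)
    (hFeq : F = {x, y, z})
    (hA2 : F ∩ A = {x, y}) (hB2 : F ∩ B = {y, z}) (hC2 : F ∩ C = {x, z}) : False := by
  obtain ⟨nxy, nxz, nyz⟩ := triple_distinct (hFeq ▸ hF3)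
  have hxF : x ∈ F := by rw [hFeq]; simp
  have hyF : y ∈ F := by rw [hFeq]; simp
  have hzF : z ∈ F := by rw [hFeq]; simp
  have axy : G.Adj x y := hFm.1 (by exact_mod_cast hxF) (by exact_mod_cast hyF) nxy
  have axz : G.Adj x z := hFm.1 (by exact_mod_cast hxF) (by exact_mod_cast hzF) nxz
  have ayz : G.Adj y z := hFm.1 (by exact_mod_cast hyF) (by exact_mod_cast hzF) nyz
  -- extract the external vertices
  have ext3 : ∀ (E : Finset V) (p q r : V), IsMaximalCliqueF G E → E.card = 3 →
      F ∩ E = {p, q} → p ≠ q → r ∈ F → r ∉ ({p, q} : Finset V) →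
      ∃ u, u ∉ F ∧ u ∈ E ∧ G.Adj u p ∧ G.Adj u q ∧ ¬ G.Adj u r := by
    intro E p q r hEm hE3 hE2 hpq hrF hr
    have hpE : p ∈ E := by
      have : p ∈ F ∩ E := by rw [hE2]; simp
      exact (Finset.mem_inter.mp this).2
    have hqE : q ∈ E := by
      have : q ∈ F ∩ E := by rw [hE2]; simp
      exact (Finset.mem_inter.mp this).2
    have hsub : ({p, q} : Finset V) ⊆ E := by
      intro w hw
      simp only [Finset.mem_insert, Finset.mem_singleton] at hw
      rcases hw with rfl | rfl <;> assumption
    obtain ⟨u, hu1, hu2⟩ := third_vertex hE3 (Finset.card_pair hpq) hsub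
    simp only [Finset.mem_insert, Finset.mem_singleton, not_or] at hu1
    have huE : u ∈ E := by rw [hu2]; simp
    have huF : u ∉ F := by
      intro hc
      have : u ∈ F ∩ E := Finset.mem_inter.mpr ⟨hc, huE⟩
      rw [hE2] at this
      simp only [Finset.mem_insert, Finset.mem_singleton] at this
      tauto
    have hup : G.Adj u p := hEm.1 (by exact_mod_cast huE) (by exact_mod_cast hpE) hu1.1
    have huq : G.Adj u q := hEm.1 (by exact_mod_cast huE) (by exact_mod_cast hqE) hu1.2
    refine ⟨u, huF, huE, hup, huq, fun hur => ?_⟩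
    have hpF : p ∈ F := by
      have : p ∈ F ∩ E := by rw [hE2]; simp
      exact (Finset.mem_inter.mp this).1
    have hqF : q ∈ F := by
      have : q ∈ F ∩ E := by rw [hE2]; simp
      exact (Finset.mem_inter.mp this).1
    simp only [Finset.mem_insert, Finset.mem_singleton, not_or] at hr
    have hF2 : F = {p, q, r} := by
      symm
      apply Finset.eq_of_subset_of_card_le
      · intro t ht
        simp only [Finset.mem_insert, Finset.mem_singleton] at ht
        rcases ht with rfl | rfl | rfl <;> assumption
      · have h3' : ({p, q, r} : Finset V).card = 3 := Finset.card_eq_three.mpr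
          ⟨p, q, r, hpq, fun h => hr.1 h.symm, fun h => hr.2 h.symm, rfl⟩
        rw [hF3, h3']
    apply not_adj_all hFm huF
    intro w hw
    rw [hF2] at hw
    simp only [Finset.mem_insert, Finset.mem_singleton] at hw
    rcases hw with rfl | rfl | rfl
    · exact hup
    · exact huq
    · exact hur
  obtain ⟨d, hdF, hdA, hdx, hdy, hndz⟩ := ext3 A x y z hAm hA3 hA2 nxy hzF
    (by simp only [Finset.mem_insert, Finset.mem_singleton]; push_neg
        exact ⟨fun h => nxz h.symm, fun h => nyz h.symm⟩)
  obtain ⟨e, heF, heB, hey, hez, hnex⟩ := ext3 B y z x hBm hB3 hB2 nyz hxF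
    (by simp only [Finset.mem_insert, Finset.mem_singleton]; push_neg
        exact ⟨nxy, nxz⟩)
  obtain ⟨f, hfF, hfC, hfx, hfz, hnfy⟩ := ext3 C x z y hCm hC3 hC2 nxz hyF
    (by simp only [Finset.mem_insert, Finset.mem_singleton]; push_neg
        exact ⟨fun h => nxy h.symm, nyz⟩)
  have ndx : d ≠ x := fun hh => hdF (by rw [hh]; exact hxF)
  have ndy : d ≠ y := fun hh => hdF (by rw [hh]; exact hyF)
  have ndz : d ≠ z := fun hh => hdF (by rw [hh]; exact hzF)
  have nex : e ≠ x := fun hh => heF (by rw [hh]; exact hxF)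
  have ney : e ≠ y := fun hh => heF (by rw [hh]; exact hyF)
  have nez : e ≠ z := fun hh => heF (by rw [hh]; exact hzF)
  have nfx : f ≠ x := fun hh => hfF (by rw [hh]; exact hxF)
  have nfy : f ≠ y := fun hh => hfF (by rw [hh]; exact hyF)
  have nfz : f ≠ z := fun hh => hfF (by rw [hh]; exact hzF)
  have nde : d ≠ e := fun hh => hnex (hh ▸ hdx)
  have ndf : d ≠ f := fun hh => hnfy (hh ▸ hdy)
  have nef : e ≠ f := fun hh => hnfy (hh ▸ hey)
  have hnde : ¬ G.Adj d e := fun h =>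
    cycle4 hch hdx.symm h hez axz.symm (fun hh => hnex hh.symm) hndz nex.symm ndz
  have hnef : ¬ G.Adj e f := fun h =>
    cycle4 hch hey.symm h hfx axy (fun hh => hnfy hh.symm) hnex nfy.symm nex
  have hndf : ¬ G.Adj d f := fun h =>
    cycle4 hch hdy.symm h hfz ayz.symm (fun hh => hnfy hh.symm) hndz nfy.symm ndz
  apply hno
  refine ⟨⟨fun i => if i.1 = 0 then d else if i.1 = 1 then y else
    if i.1 = 2 then e else if i.1 = 3 then x else if i.1 = 4 then z else f, ?_⟩, ?_⟩
  · intro i j hij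
    fin_cases i <;> fin_cases j <;> simp_all
  · intro a b
    fin_cases a <;> fin_cases b <;>
      simp only [Function.Embedding.coeFn_mk] <;>
      norm_num <;>
      first
      | exact iff_of_true (by first | assumption | exact SimpleGraph.Adj.symm (by assumption))
          (by rw [threeTriangles, SimpleGraph.fromRel_adj]; decide)
      | exact iff_of_false (by first
            | exact G.loopless _
            | assumption
            | exact fun hh => hnde hh.symm
            | exact fun hh => hnef hh.symm
            | exact fun hh => hndf hh.symm
            | exact fun hh => hndz hh.symm
            | exact fun hh => hnex hh.symm
            | exact fun hh => hnfy hh.symm)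
          (by rw [threeTriangles]; rw [SimpleGraph.fromRel_adj]; decide)

/-- L2: no facet of the family has three distinct codim-1 neighbours. -/
lemma no_branching (hch : IsChordal G) (hcf : ClawFree G)
    (hno : NoInducedCopy G threeTriangles) {F A B C : Finset V}
    (hFm : IsMaximalCliqueF G F) (hF3 : F.card = 3)
    (hAm : IsMaximalCliqueF G A) (hA3 : A.card = 3)
    (hBm : IsMaximalCliqueF G B) (hB3 : B.card = 3)
    (hCm : IsMaximalCliqueF G C) (hC3 : C.card = 3)
    (dAB : A ≠ B) (dAC : A ≠ C) (dBC : B ≠ C)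
    (iA : (F ∩ A).card = 2) (iB : (F ∩ B).card = 2) (iC : (F ∩ C).card = 2) : False := by
  have hFA : F ≠ A := fun h => by rw [← h, Finset.inter_self, hF3] at iA; omega
  have hFB : F ≠ B := fun h => by rw [← h, Finset.inter_self, hF3] at iB; omega
  have hFC : F ≠ C := fun h => by rw [← h, Finset.inter_self, hF3] at iC; omega
  have hEne : ∀ (X Y : Finset V), IsMaximalCliqueF G X ∧ X.card = 3 →
      IsMaximalCliqueF G Y ∧ Y.card = 3 → X ≠ Y → F ≠ X → F ≠ Y →
      (F ∩ X).card = 2 → F ∩ X = F ∩ Y → False := by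
    intro X Y hX hY hXY hFX hFY h2 heq
    obtain ⟨a, b, hab, hpair⟩ := Finset.card_eq_two.mp h2
    refine no_three_facets_on_edge hcf ⟨hFm, hF3⟩ hX hY hFX hFY hXY hab ?_ ?_ ?_
    · rw [← hpair]; exact Finset.inter_subset_left
    · rw [← hpair]; exact Finset.inter_subset_right
    · rw [← hpair, heq]; exact Finset.inter_subset_right
  have dAB' : F ∩ A ≠ F ∩ B := fun h => hEne A B ⟨hAm, hA3⟩ ⟨hBm, hB3⟩ dAB hFA hFB iA h
  have dAC' : F ∩ A ≠ F ∩ C := fun h => hEne A C ⟨hAm, hA3⟩ ⟨hCm, hC3⟩ dAC hFA hFC iA h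
  have dBC' : F ∩ B ≠ F ∩ C := fun h => hEne B C ⟨hBm, hB3⟩ ⟨hCm, hC3⟩ dBC hFB hFC iB h
  obtain ⟨x, y, z, nxy, nxz, nyz, hFeq⟩ := Finset.card_eq_three.mp hF3
  have hsubA : F ∩ A ⊆ ({x, y, z} : Finset V) := hFeq ▸ Finset.inter_subset_left
  have hsubB : F ∩ B ⊆ ({x, y, z} : Finset V) := hFeq ▸ Finset.inter_subset_left
  have hsubC : F ∩ C ⊆ ({x, y, z} : Finset V) := hFeq ▸ Finset.inter_subset_left
  have permF : ∀ (x' y' z' : V), ({x', y', z'} : Finset V) = {x, y, z} → F = {x', y', z'} := by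
    intro x' y' z' h; rw [hFeq, h]
  have pF1 : F = {y, x, z} := by rw [hFeq]; ext t; simp; tauto
  have pF2 : F = {z, x, y} := by rw [hFeq]; ext t; simp; tauto
  have pF3 : F = {z, y, x} := by rw [hFeq]; ext t; simp; tauto
  have pF4 : F = {y, z, x} := by rw [hFeq]; ext t; simp; tauto
  have pF5 : F = {x, z, y} := by rw [hFeq]; ext t; simp; tauto
  rcases two_subset_of_three hsubA iA with hEA | hEA | hEA <;>
    rcases two_subset_of_three hsubB iB with hEB | hEB | hEB <;>
      rcases two_subset_of_three hsubC iC with hEC | hEC | hEC <;>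
  first
  | exact dAB' (hEA.trans hEB.symm)
  | exact dAC' (hEA.trans hEC.symm)
  | exact dBC' (hEB.trans hEC.symm)
  | (apply branch_core hch hcf hno x y z hFm hF3 hAm hA3 hBm hB3 hCm hC3 <;>
      first
        | exact hFeq
        | exact pF1
        | exact pF2
        | exact pF3
        | exact pF4
        | exact pF5
        | (rw [hEA]; done)
        | (rw [hEA]; exact Finset.pair_comm _ _)
        | (rw [hEB]; done)
        | (rw [hEB]; exact Finset.pair_comm _ _)
        | (rw [hEC]; done)
        | (rw [hEC]; exact Finset.pair_comm _ _))
  | (apply branch_core hch hcf hno y x z hFm hF3 hAm hA3 hBm hB3 hCm hC3 <;>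
      first
        | exact hFeq
        | exact pF1
        | exact pF2
        | exact pF3
        | exact pF4
        | exact pF5
        | (rw [hEA]; done)
        | (rw [hEA]; exact Finset.pair_comm _ _)
        | (rw [hEB]; done)
        | (rw [hEB]; exact Finset.pair_comm _ _)
        | (rw [hEC]; done)
        | (rw [hEC]; exact Finset.pair_comm _ _))
  | (apply branch_core hch hcf hno z x y hFm hF3 hAm hA3 hBm hB3 hCm hC3 <;>
      first
        | exact hFeq
        | exact pF1
        | exact pF2
        | exact pF3
        | exact pF4
        | exact pF5
        | (rw [hEA]; done)
        | (rw [hEA]; exact Finset.pair_comm _ _)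
        | (rw [hEB]; done)
        | (rw [hEB]; exact Finset.pair_comm _ _)
        | (rw [hEC]; done)
        | (rw [hEC]; exact Finset.pair_comm _ _))
  | (apply branch_core hch hcf hno z y x hFm hF3 hAm hA3 hBm hB3 hCm hC3 <;>
      first
        | exact hFeq
        | exact pF1
        | exact pF2
        | exact pF3
        | exact pF4
        | exact pF5
        | (rw [hEA]; done)
        | (rw [hEA]; exact Finset.pair_comm _ _)
        | (rw [hEB]; done)
        | (rw [hEB]; exact Finset.pair_comm _ _)
        | (rw [hEC]; done)
        | (rw [hEC]; exact Finset.pair_comm _ _))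
  | (apply branch_core hch hcf hno y z x hFm hF3 hAm hA3 hBm hB3 hCm hC3 <;>
      first
        | exact hFeq
        | exact pF1
        | exact pF2
        | exact pF3
        | exact pF4
        | exact pF5
        | (rw [hEA]; done)
        | (rw [hEA]; exact Finset.pair_comm _ _)
        | (rw [hEB]; done)
        | (rw [hEB]; exact Finset.pair_comm _ _)
        | (rw [hEC]; done)
        | (rw [hEC]; exact Finset.pair_comm _ _))
  | (apply branch_core hch hcf hno x z y hFm hF3 hAm hA3 hBm hB3 hCm hC3 <;>
      first
        | exact hFeq
        | exact pF1
        | exact pF2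
        | exact pF3
        | exact pF4
        | exact pF5
        | (rw [hEA]; done)
        | (rw [hEA]; exact Finset.pair_comm _ _)
        | (rw [hEB]; done)
        | (rw [hEB]; exact Finset.pair_comm _ _)
        | (rw [hEC]; done)
        | (rw [hEC]; exact Finset.pair_comm _ _))


/-- no vertex lies in four consecutive facets of the chain -/
lemma no_four_fan (hch : IsChordal G) (hcf : ClawFree G) {F1 F2 F3 F4 : Finset V}
    (h1 : IsMaximalCliqueF G F1 ∧ F1.card = 3) (h2 : IsMaximalCliqueF G F2 ∧ F2.card = 3)
    (h3 : IsMaximalCliqueF G F3 ∧ F3.card = 3) (h4 : IsMaximalCliqueF G F4 ∧ F4.card = 3)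
    (d12 : F1 ≠ F2) (d13 : F1 ≠ F3) (d14 : F1 ≠ F4) (d23 : F2 ≠ F3) (d24 : F2 ≠ F4)
    (d34 : F3 ≠ F4)
    (i12 : (F1 ∩ F2).card = 2) (i23 : (F2 ∩ F3).card = 2) (i34 : (F3 ∩ F4).card = 2)
    {v : V} (hv1 : v ∈ F1) (hv2 : v ∈ F2) (hv3 : v ∈ F3) (hv4 : v ∈ F4) : False := by
  obtain ⟨a, hav, hE12⟩ := pair_rest i12 (Finset.mem_inter.mpr ⟨hv1, hv2⟩)
  obtain ⟨b, hbv, hE23⟩ := pair_rest i23 (Finset.mem_inter.mpr ⟨hv2, hv3⟩)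
  obtain ⟨c, hcv, hE34⟩ := pair_rest i34 (Finset.mem_inter.mpr ⟨hv3, hv4⟩)
  have hva1 : ({v, a} : Finset V) ⊆ F1 := hE12 ▸ Finset.inter_subset_left
  have hva2 : ({v, a} : Finset V) ⊆ F2 := hE12 ▸ Finset.inter_subset_right
  have hvb2 : ({v, b} : Finset V) ⊆ F2 := hE23 ▸ Finset.inter_subset_left
  have hvb3 : ({v, b} : Finset V) ⊆ F3 := hE23 ▸ Finset.inter_subset_right
  have hvc3 : ({v, c} : Finset V) ⊆ F3 := hE34 ▸ Finset.inter_subset_left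
  have hvc4 : ({v, c} : Finset V) ⊆ F4 := hE34 ▸ Finset.inter_subset_right
  have nab : a ≠ b := by
    rintro rfl
    exact no_three_facets_on_edge hcf h1 h2 h3 d12 d13 d23 (fun h => hav h.symm)
      hva1 hva2 hvb3
  have nbc : b ≠ c := by
    rintro rfl
    exact no_three_facets_on_edge hcf h2 h3 h4 d23 d24 d34 (fun h => hbv h.symm)
      hvb2 hvb3 hvc4
  have nac : a ≠ c := by
    rintro rfl
    exact no_three_facets_on_edge hcf h1 h2 h3 d12 d13 d23 (fun h => hav h.symm)
      hva1 hva2 hvc3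
  have haF2 : a ∈ F2 := hva2 (by simp)
  have hbF2 : b ∈ F2 := hvb2 (by simp)
  have hbF3 : b ∈ F3 := hvb3 (by simp)
  have hcF3 : c ∈ F3 := hvc3 (by simp)
  have haF1 : a ∈ F1 := hva1 (by simp)
  have hcF4 : c ∈ F4 := hvc4 (by simp)
  have hF2eq : F2 = {v, a, b} := by
    symm
    apply Finset.eq_of_subset_of_card_le
    · intro t ht
      simp only [Finset.mem_insert, Finset.mem_singleton] at ht
      rcases ht with rfl | rfl | rfl
      · exact hv2
      · exact haF2
      · exact hbF2
    · rw [h2.2]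
      have : ({v, a, b} : Finset V).card = 3 :=
        Finset.card_eq_three.mpr ⟨v, a, b, fun h => hav h.symm, fun h => hbv h.symm, nab, rfl⟩
      omega
  have hF3eq : F3 = {v, b, c} := by
    symm
    apply Finset.eq_of_subset_of_card_le
    · intro t ht
      simp only [Finset.mem_insert, Finset.mem_singleton] at ht
      rcases ht with rfl | rfl | rfl
      · exact hv3
      · exact hbF3
      · exact hcF3
    · rw [h3.2]
      have : ({v, b, c} : Finset V).card = 3 :=
        Finset.card_eq_three.mpr ⟨v, b, c, fun h => hbv h.symm, fun h => hcv h.symm, nbc, rfl⟩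
      omega
  -- third vertices of F1 and F4
  obtain ⟨t, htm, hF1eq⟩ := third_vertex h1.2 (Finset.card_pair (fun h => hav h.symm)) hva1
  obtain ⟨s, hsm, hF4eq⟩ := third_vertex h4.2 (Finset.card_pair (fun h => hcv h.symm)) hvc4
  simp only [Finset.mem_insert, Finset.mem_singleton, not_or] at htm hsm
  have htF1 : t ∈ F1 := by rw [hF1eq]; simp
  have hsF4 : s ∈ F4 := by rw [hF4eq]; simp
  have htF2 : t ∉ F2 := by
    intro hc'
    have : t ∈ F1 ∩ F2 := Finset.mem_inter.mpr ⟨htF1, hc'⟩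
    rw [hE12] at this
    simp only [Finset.mem_insert, Finset.mem_singleton] at this
    tauto
  have hsF3 : s ∉ F3 := by
    intro hc'
    have : s ∈ F3 ∩ F4 := Finset.mem_inter.mpr ⟨hc', hsF4⟩
    rw [hE34] at this
    simp only [Finset.mem_insert, Finset.mem_singleton] at this
    tauto
  have ntb : t ≠ b := fun h => htF2 (by rw [h]; exact hbF2)
  have nta : t ≠ a := htm.2
  have ntv : t ≠ v := htm.1
  have nsb : s ≠ b := fun h => hsF3 (by rw [h]; exact hbF3)
  have nsv : s ≠ v := hsm.1
  have nsc : s ≠ c := hsm.2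
  have nta' : t ∉ ({v, a} : Finset V) := by simp [ntv, nta]
  have ntc : t ≠ c := by
    rintro rfl
    exact no_three_facets_on_edge hcf h1 h3 h4 d13 d14 d34 (fun h => hcv h.symm)
      (by intro w hw; simp only [Finset.mem_insert, Finset.mem_singleton] at hw
          rcases hw with rfl | rfl
          · exact hv1
          · exact htF1) hvc3 hvc4
  have nsa : s ≠ a := by
    rintro rfl
    exact no_three_facets_on_edge hcf h1 h2 h4 d12 d14 d24 (fun h => hav h.symm)
      hva1 hva2
      (by intro w hw; simp only [Finset.mem_insert, Finset.mem_singleton] at hw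
          rcases hw with rfl | rfl
          · exact hv4
          · exact hsF4)
  -- adjacencies
  have cl1 := h1.1.1
  have cl2 := h2.1.1
  have cl3 := h3.1.1
  have cl4 := h4.1.1
  have hta : G.Adj t a := cl1 (by exact_mod_cast htF1) (by exact_mod_cast haF1) nta
  have htv : G.Adj t v := cl1 (by exact_mod_cast htF1) (by exact_mod_cast hv1) ntv
  have hab : G.Adj a b := cl2 (by exact_mod_cast haF2) (by exact_mod_cast hbF2) nab
  have hav' : G.Adj a v := cl2 (by exact_mod_cast haF2) (by exact_mod_cast hv2) hav
  have hbc : G.Adj b c := cl3 (by exact_mod_cast hbF3) (by exact_mod_cast hcF3) nbc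
  have hbv : G.Adj b v := cl3 (by exact_mod_cast hbF3) (by exact_mod_cast hv3) hbv
  have hcv' : G.Adj c v := cl4 (by exact_mod_cast hcF4) (by exact_mod_cast hv4) hcv
  have hsc : G.Adj s c := cl4 (by exact_mod_cast hsF4) (by exact_mod_cast hcF4) nsc
  have hsv : G.Adj s v := cl4 (by exact_mod_cast hsF4) (by exact_mod_cast hv4) nsv
  -- non-adjacencies from maximality
  have hntb : ¬ G.Adj t b := by
    intro hcon
    apply not_adj_all h2.1 htF2
    intro w hw
    rw [hF2eq] at hw
    simp only [Finset.mem_insert, Finset.mem_singleton] at hw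
    rcases hw with rfl | rfl | rfl
    · exact htv
    · exact hta
    · exact hcon
  have haF3 : a ∉ F3 := by
    intro hc'
    have : a ∈ F2 ∩ F3 := Finset.mem_inter.mpr ⟨haF2, hc'⟩
    rw [hE23] at this
    simp only [Finset.mem_insert, Finset.mem_singleton] at this
    rcases this with rfl | rfl
    · exact hav rfl
    · exact nab rfl
  have hnac : ¬ G.Adj a c := by
    intro hcon
    apply not_adj_all h3.1 haF3
    intro w hw
    rw [hF3eq] at hw
    simp only [Finset.mem_insert, Finset.mem_singleton] at hw
    rcases hw with rfl | rfl | rfl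
    · exact hav'
    · exact hab
    · exact hcon
  have hnsb : ¬ G.Adj s b := by
    intro hcon
    apply not_adj_all h3.1 hsF3
    intro w hw
    rw [hF3eq] at hw
    simp only [Finset.mem_insert, Finset.mem_singleton] at hw
    rcases hw with rfl | rfl | rfl
    · exact hsv
    · exact hcon
    · exact hsc
  -- s = t is impossible (4-cycle t a b c)
  have nst : s ≠ t := by
    rintro rfl
    exact cycle4 hch hta hab hbc hsc.symm hntb hnac ntb nac
  have hntc : ¬ G.Adj t c := fun hcon =>
    cycle4 hch hta hab hbc hcon.symm hntb hnac ntb nac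
  have hnas : ¬ G.Adj a s := fun hcon =>
    cycle4 hch hab hbc hsc.symm hcon.symm hnac (fun h => hnsb h.symm) nac
      (fun h => nsb h.symm)
  have hnts : ¬ G.Adj t s := fun hcon =>
    cycle5 hch hta hab hbc hsc.symm hcon.symm hntb hntc hnac hnas
      (fun h => hnsb h.symm) ntb ntc nac (fun h => nsa h.symm) (fun h => nsb h.symm)
  exact claw hcf htv.symm hbv.symm hsv.symm hntb hnts (fun h => hnsb h.symm)
    ntb nst.symm (fun h => nsb h.symm)


/-- the vertices along a line-complex representation are pairwise distinct -/
lemma distinct_ladder (hch : IsChordal G) (hcf : ClawFree G)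
    (m : ℕ) (hm : 1 ≤ m) (Fc : ℕ → Finset V) (q : ℕ → V)
    (hfac : ∀ k, 1 ≤ k → k ≤ m → IsMaximalCliqueF G (Fc k) ∧ (Fc k).card = 3)
    (hinj : ∀ k l, 1 ≤ k → k < l → l ≤ m → Fc k ≠ Fc l)
    (htr : ∀ k, 1 ≤ k → k ≤ m → Fc k = {q k, q (k+1), q (k+2)}) :
    ∀ i j, 1 ≤ i → i < j → j ≤ m + 2 → q i ≠ q j := by
  have hd : ∀ t, 1 ≤ t → t ≤ m → q t ≠ q (t+1) ∧ q t ≠ q (t+2) ∧ q (t+1) ≠ q (t+2) := by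
    intro t h1 h2
    have h3 := (hfac t h1 h2).2
    rw [htr t h1 h2] at h3
    exact triple_distinct h3
  have hmemq : ∀ t, 1 ≤ t → t ≤ m →
      q t ∈ Fc t ∧ q (t+1) ∈ Fc t ∧ q (t+2) ∈ Fc t := by
    intro t h1 h2
    rw [htr t h1 h2]
    exact ⟨by simp, by simp, by simp⟩
  -- basic distinctness, gaps 1 and 2
  have dist1 : ∀ i, 1 ≤ i → i + 1 ≤ m + 2 → q i ≠ q (i+1) := by
    intro i h1 h2
    rcases le_or_gt i m with h | h
    · exact (hd i h1 h).1
    · have hieq : i = m + 1 := by omega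
      subst hieq
      exact (hd m hm le_rfl).2.2
  have dist2 : ∀ i, 1 ≤ i → i + 2 ≤ m + 2 → q i ≠ q (i+2) := by
    intro i h1 h2
    exact (hd i h1 (by omega)).2.1
  -- adjacency along the line
  have hadj1 : ∀ s, 1 ≤ s → s + 1 ≤ m + 2 → G.Adj (q s) (q (s+1)) := by
    intro s h1 h2
    rcases le_or_gt s m with h | h
    · exact (hfac s h1 h).1.1 (by exact_mod_cast (hmemq s h1 h).1)
        (by exact_mod_cast (hmemq s h1 h).2.1) (dist1 s h1 h2)
    · have hs : s = m + 1 := by omega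
      subst hs
      exact (hfac m hm le_rfl).1.1 (by exact_mod_cast (hmemq m hm le_rfl).2.1)
        (by exact_mod_cast (hmemq m hm le_rfl).2.2) (dist1 (m+1) (by omega) h2)
  have hadj2 : ∀ s, 1 ≤ s → s + 2 ≤ m + 2 → G.Adj (q s) (q (s+2)) := by
    intro s h1 h2
    exact (hfac s h1 (by omega)).1.1 (by exact_mod_cast (hmemq s h1 (by omega)).1)
      (by exact_mod_cast (hmemq s h1 (by omega)).2.2) (dist2 s h1 h2)
  have notadjall : ∀ t, 1 ≤ t → t ≤ m → ∀ v, v ≠ q t → v ≠ q (t+1) → v ≠ q (t+2) →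
      G.Adj v (q t) → G.Adj v (q (t+1)) → G.Adj v (q (t+2)) → False := by
    intro t h1 h2 v n1 n2 n3 a1 a2 a3
    apply not_adj_all (hfac t h1 h2).1 (v := v)
    · rw [htr t h1 h2]
      simp only [Finset.mem_insert, Finset.mem_singleton]
      push_neg
      exact ⟨n1, n2, n3⟩
    · intro x hx
      rw [htr t h1 h2] at hx
      simp only [Finset.mem_insert, Finset.mem_singleton] at hx
      rcases hx with rfl | rfl | rfl <;> assumption
  -- generic wrappers
  have wrapD : ∀ (N : ℕ), (∀ g, 1 ≤ g → g ≤ N → ∀ i, 1 ≤ i → i + g ≤ m+2 → q i ≠ q (i+g)) →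
      ∀ u u', 1 ≤ u → u < u' → u' - u ≤ N → u' ≤ m + 2 → q u ≠ q u' := by
    intro N hN u u' h1 h2 h3 h4 hequ
    have := hN (u' - u) (by omega) h3 u h1 (by omega)
    rw [show u + (u' - u) = u' from by omega] at this
    exact this hequ
  have wrapN : ∀ (N : ℕ),
      (∀ d, 3 ≤ d → d ≤ N → ∀ s, 1 ≤ s → s + d ≤ m+2 → ¬ G.Adj (q s) (q (s+d))) →
      ∀ u u', 1 ≤ u → u + 3 ≤ u' → u' - u ≤ N → u' ≤ m + 2 → ¬ G.Adj (q u) (q u') := by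
    intro N hN u u' h1 h2 h3 h4 hadj'
    have := hN (u' - u) (by omega) h3 u h1 (by omega)
    rw [show u + (u' - u) = u' from by omega] at this
    exact this hadj'
  have MAIN : ∀ n, (∀ g, 1 ≤ g → g ≤ n → ∀ i, 1 ≤ i → i + g ≤ m+2 → q i ≠ q (i+g)) ∧
      (∀ d, 3 ≤ d → d ≤ n → ∀ s, 1 ≤ s → s + d ≤ m+2 → ¬ G.Adj (q s) (q (s+d))) := by
    intro n
    induction n with
    | zero =>
      exact ⟨fun g hg hg0 => absurd (hg.trans hg0) (by norm_num),
        fun d hd' hd0 => absurd (le_trans (by omega : 1 ≤ d) hd0) (by norm_num)⟩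
    | succ n ih =>
      have hD : ∀ g, 1 ≤ g → g ≤ n + 1 → ∀ i, 1 ≤ i → i + g ≤ m+2 → q i ≠ q (i+g) := by
        intro g hg hgn
        rcases Nat.lt_or_ge g (n+1) with hlt | hge
        · exact ih.1 g hg (by omega)
        have hgeq : g = n + 1 := by omega
        intro i h1 h2 heq
        rcases (show g = 1 ∨ g = 2 ∨ g = 3 ∨ g = 4 ∨ g = 5 ∨ 6 ≤ g from by omega) with
          rfl | rfl | rfl | rfl | rfl | h6
        · exact dist1 i h1 h2 heq
        · exact dist2 i h1 h2 heq
        · -- gap 3 : facet equality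
          apply hinj i (i+1) h1 (by omega) (by omega)
          rw [htr i h1 (by omega), htr (i+1) (by omega) (by omega)]
          rw [show q (i+1+2) = q i from by rw [show i+1+2 = i+3 from by omega]; exact heq.symm]
          ext w
          simp only [Finset.mem_insert, Finset.mem_singleton]
          tauto
        · -- gap 4 : q i adjacent to all of Fc (i+1)
          have a1 : G.Adj (q i) (q (i+1)) := hadj1 i h1 (by omega)
          have a2 : G.Adj (q i) (q (i+2)) := hadj2 i h1 (by omega)
          have a3 : G.Adj (q i) (q (i+3)) := by
            have h' : G.Adj (q (i+2)) (q (i+2+2)) := hadj2 (i+2) (by omega) (by omega)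
            rw [show i+2+2 = i+4 from by omega, ← heq] at h'
            have h'' : G.Adj (q (i+2)) (q (i+3)) := hadj1 (i+2) (by omega) (by omega)
            have hmem := hmemq (i+2) (by omega) (by omega)
            have a' : G.Adj (q (i+3)) (q (i+4)) := hadj1 (i+3) (by omega) (by omega)
            rw [← heq] at a'
            exact a'.symm
          exact notadjall (i+1) (by omega) (by omega) (q i)
            (wrapD n ih.1 i (i+1) h1 (by omega) (by omega) (by omega))
            (by rw [show i+1+1 = i+2 from by omega]
                exact wrapD n ih.1 i (i+2) h1 (by omega) (by omega) (by omega))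
            (by rw [show i+1+2 = i+3 from by omega]
                exact wrapD n ih.1 i (i+3) h1 (by omega) (by omega) (by omega))
            a1 (by rw [show i+1+1 = i+2 from by omega]; exact a2)
            (by rw [show i+1+2 = i+3 from by omega]; exact a3)
        · -- gap 5
          have a1 : G.Adj (q i) (q (i+1)) := hadj1 i h1 (by omega)
          have a2 : G.Adj (q i) (q (i+2)) := hadj2 i h1 (by omega)
          have a3 : G.Adj (q i) (q (i+3)) := by
            have a' : G.Adj (q (i+3)) (q (i+3+2)) := hadj2 (i+3) (by omega) (by omega)
            rw [show i+3+2 = i+5 from by omega, ← heq] at a'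
            exact a'.symm
          exact notadjall (i+1) (by omega) (by omega) (q i)
            (wrapD n ih.1 i (i+1) h1 (by omega) (by omega) (by omega))
            (by rw [show i+1+1 = i+2 from by omega]
                exact wrapD n ih.1 i (i+2) h1 (by omega) (by omega) (by omega))
            (by rw [show i+1+2 = i+3 from by omega]
                exact wrapD n ih.1 i (i+3) h1 (by omega) (by omega) (by omega))
            a1 (by rw [show i+1+1 = i+2 from by omega]; exact a2)
            (by rw [show i+1+2 = i+3 from by omega]; exact a3)
        · -- gap ≥ 6
          have a1 : G.Adj (q i) (q (i+1)) := hadj1 i h1 (by omega)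
          have a2 : G.Adj (q i) (q (i+2)) := hadj2 i h1 (by omega)
          have aj1 : G.Adj (q i) (q (i+g-1)) := by
            have a' : G.Adj (q (i+g-1)) (q (i+g-1+1)) := hadj1 (i+g-1) (by omega) (by omega)
            rw [show i+g-1+1 = i+g from by omega, ← heq] at a'
            exact a'.symm
          have aj2 : G.Adj (q i) (q (i+g-2)) := by
            have a' : G.Adj (q (i+g-2)) (q (i+g-2+2)) := hadj2 (i+g-2) (by omega) (by omega)
            rw [show i+g-2+2 = i+g from by omega, ← heq] at a'
            exact a'.symm
          have hne' : ∀ u, i+1 ≤ u → u ≤ i+g-1 → q i ≠ q u :=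
            fun u hu1 hu2 => wrapD n ih.1 i u h1 (by omega) (by omega) (by omega)
          have hA3 : ∀ u, i+1 ≤ u → u + 2 ≤ i+g-1 → G.Adj (q i) (q u) →
              G.Adj (q i) (q (u+1)) → G.Adj (q i) (q (u+2)) → False := by
            intro u hu1 hu2 b1 b2 b3
            exact notadjall u (by omega) (by omega) (q i)
              (hne' u hu1 (by omega)) (hne' (u+1) (by omega) (by omega))
              (hne' (u+2) (by omega) (by omega)) b1 b2 b3
          have hi3 : ¬ G.Adj (q i) (q (i+3)) := by
            intro hcon
            exact hA3 (i+1) (by omega) (by omega) a1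
              (by rw [show i+1+1 = i+2 from by omega]; exact a2)
              (by rw [show i+1+2 = i+3 from by omega]; exact hcon)
          have hj3 : ¬ G.Adj (q i) (q (i+g-3)) := by
            intro hcon
            exact hA3 (i+g-3) (by omega) (by omega) hcon
              (by rw [show i+g-3+1 = i+g-2 from by omega]; exact aj2)
              (by rw [show i+g-3+2 = i+g-1 from by omega]; exact aj1)
          by_cases hmid : ∃ c', i+4 ≤ c' ∧ c' ≤ i+g-4 ∧ G.Adj (q i) (q c')
          · obtain ⟨c', hc1, hc2, hc3⟩ := hmid
            exact claw hcf a1 hc3 aj1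
              (wrapN n ih.2 (i+1) c' (by omega) (by omega) (by omega) (by omega))
              (wrapN n ih.2 (i+1) (i+g-1) (by omega) (by omega) (by omega) (by omega))
              (wrapN n ih.2 c' (i+g-1) (by omega) (by omega) (by omega) (by omega))
              (wrapD n ih.1 (i+1) c' (by omega) (by omega) (by omega) (by omega))
              (wrapD n ih.1 (i+1) (i+g-1) (by omega) (by omega) (by omega) (by omega))
              (wrapD n ih.1 c' (i+g-1) (by omega) (by omega) (by omega) (by omega))
          · push_neg at hmid
            have hmid' : ∀ u, i+3 ≤ u → u ≤ i+g-3 → ¬ G.Adj (q i) (q u) := by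
              intro u hu1 hu2
              rcases (show u = i+3 ∨ (i+4 ≤ u ∧ u ≤ i+g-4) ∨ u = i+g-3 from by omega) with
                rfl | ⟨hu3, hu4⟩ | rfl
              · exact hi3
              · exact hmid u hu3 hu4
              · exact hj3
            rcases Nat.even_or_odd g with hpar | hpar
            · -- g even : w = q i, a = i+1, t = (g-2)/2
              obtain ⟨gg, hgg⟩ := hpar
              apply stepTwoCycle hch q (q i) (i+1) ((g-2)/2) (by omega)
              · exact a1
              · rw [show i+1+2*((g-2)/2) = i+g-1 from by omega]
                exact aj1.symm
              · intro k hk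
                have := hadj2 (i+1+2*k) (by omega) (by omega)
                rwa [show i+1+2*k+2 = i+1+2*(k+1) from by omega] at this
                  <;> skip
              · intro k hk1 hk2
                exact hmid' (i+1+2*k) (by omega) (by omega)
              · intro k l hkl hl
                exact wrapN n ih.2 (i+1+2*k) (i+1+2*l) (by omega) (by omega) (by omega)
                  (by omega)
              · intro k hk
                exact hne' (i+1+2*k) (by omega) (by omega)
              · intro k l hkl hl
                exact wrapD n ih.1 (i+1+2*k) (i+1+2*l) (by omega) (by omega) (by omega)
                  (by omega)
            · -- g odd : w = q i, a = i+2, t = (g-3)/2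
              obtain ⟨gg, hgg⟩ := hpar
              apply stepTwoCycle hch q (q i) (i+2) ((g-3)/2) (by omega)
              · exact a2
              · rw [show i+2+2*((g-3)/2) = i+g-1 from by omega]
                exact aj1.symm
              · intro k hk
                have := hadj2 (i+2+2*k) (by omega) (by omega)
                rwa [show i+2+2*k+2 = i+2+2*(k+1) from by omega] at this
              · intro k hk1 hk2
                exact hmid' (i+2+2*k) (by omega) (by omega)
              · intro k l hkl hl
                exact wrapN n ih.2 (i+2+2*k) (i+2+2*l) (by omega) (by omega) (by omega)
                  (by omega)
              · intro k hk
                exact hne' (i+2+2*k) (by omega) (by omega)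
              · intro k l hkl hl
                exact wrapD n ih.1 (i+2+2*k) (i+2+2*l) (by omega) (by omega) (by omega)
                  (by omega)
      have hN : ∀ d, 3 ≤ d → d ≤ n + 1 → ∀ s, 1 ≤ s → s + d ≤ m+2 →
          ¬ G.Adj (q s) (q (s+d)) := by
        intro d hd3 hdn
        rcases Nat.lt_or_ge d (n+1) with hlt | hge
        · exact ih.2 d hd3 (by omega)
        have hdeq : d = n + 1 := by omega
        intro s h1 h2 hadj'
        rcases (show d = 3 ∨ d = 4 ∨ (5 ≤ d ∧ Odd d) ∨ (6 ≤ d ∧ Even d) from by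
          rcases Nat.even_or_odd d with h | h
          · rcases (show d = 4 ∨ 6 ≤ d from by
              rcases h with ⟨dd, hdd⟩; omega) with h' | h'
            · tauto
            · tauto
          · rcases (show d = 3 ∨ 5 ≤ d from by
              rcases h with ⟨dd, hdd⟩; omega) with h' | h'
            · tauto
            · tauto) with rfl | rfl | ⟨hd5, hodd⟩ | ⟨hd6, heven⟩
        · -- d = 3 : maximality
          exact notadjall (s+1) (by omega) (by omega) (q s)
            (dist1 s h1 (by omega))
            (by rw [show s+1+1 = s+2 from by omega]; exact dist2 s h1 (by omega))
            (by rw [show s+1+2 = s+3 from by omega]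
                exact wrapD (n+1) hD s (s+3) h1 (by omega) (by omega) (by omega))
            (hadj1 s h1 (by omega))
            (by rw [show s+1+1 = s+2 from by omega]; exact hadj2 s h1 (by omega))
            (by rw [show s+1+2 = s+3 from by omega]; exact hadj')
        · -- d = 4 : 4-cycle  s, s+1, s+3, s+4
          have e1 : G.Adj (q s) (q (s+1)) := hadj1 s h1 (by omega)
          have e2 : G.Adj (q (s+1)) (q (s+3)) := by
            have := hadj2 (s+1) (by omega) (by omega)
            rwa [show s+1+2 = s+3 from by omega] at this
          have e3 : G.Adj (q (s+3)) (q (s+4)) := by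
            have := hadj1 (s+3) (by omega) (by omega)
            rwa [show s+3+1 = s+4 from by omega] at this
          exact cycle4 hch e1 e2 e3 hadj'.symm
            (wrapN n ih.2 s (s+3) h1 (by omega) (by omega) (by omega))
            (wrapN n ih.2 (s+1) (s+4) (by omega) (by omega) (by omega) (by omega))
            (wrapD (n+1) hD s (s+3) h1 (by omega) (by omega) (by omega))
            (wrapD (n+1) hD (s+1) (s+4) (by omega) (by omega) (by omega) (by omega))
        · -- d odd ≥ 5 : w = q s, a = s+1, t = (d-1)/2
          obtain ⟨dd, hdd⟩ := hodd
          apply stepTwoCycle hch q (q s) (s+1) ((d-1)/2) (by omega)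
          · exact hadj1 s h1 (by omega)
          · rw [show s+1+2*((d-1)/2) = s+d from by omega]
            exact hadj'.symm
          · intro k hk
            have := hadj2 (s+1+2*k) (by omega) (by omega)
            rwa [show s+1+2*k+2 = s+1+2*(k+1) from by omega] at this
          · intro k hk1 hk2
            exact wrapN n ih.2 s (s+1+2*k) h1 (by omega) (by omega) (by omega)
          · intro k l hkl hl
            exact wrapN n ih.2 (s+1+2*k) (s+1+2*l) (by omega) (by omega) (by omega)
              (by omega)
          · intro k hk
            exact wrapD (n+1) hD s (s+1+2*k) h1 (by omega) (by omega) (by omega)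
          · intro k l hkl hl
            exact wrapD (n+1) hD (s+1+2*k) (s+1+2*l) (by omega) (by omega) (by omega)
              (by omega)
        · -- d even ≥ 6 : w = q s, a = s+2, t = (d-2)/2
          obtain ⟨dd, hdd⟩ := heven
          apply stepTwoCycle hch q (q s) (s+2) ((d-2)/2) (by omega)
          · exact hadj2 s h1 (by omega)
          · rw [show s+2+2*((d-2)/2) = s+d from by omega]
            exact hadj'.symm
          · intro k hk
            have := hadj2 (s+2+2*k) (by omega) (by omega)
            rwa [show s+2+2*k+2 = s+2+2*(k+1) from by omega] at this
          · intro k hk1 hk2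
            exact wrapN n ih.2 s (s+2+2*k) h1 (by omega) (by omega) (by omega)
          · intro k l hkl hl
            exact wrapN n ih.2 (s+2+2*k) (s+2+2*l) (by omega) (by omega) (by omega)
              (by omega)
          · intro k hk
            exact wrapD (n+1) hD s (s+2+2*k) h1 (by omega) (by omega) (by omega)
          · intro k l hkl hl
            exact wrapD (n+1) hD (s+2+2*k) (s+2+2*l) (by omega) (by omega) (by omega)
              (by omega)
      exact ⟨hD, hN⟩
  intro i j h1 hij hj heq
  have := (MAIN (m+2)).1 (j-i) (by omega) (by omega) i h1 (by omega)
  rw [show i + (j-i) = j from by omega] at this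
  exact this heq


lemma build_q (hch : IsChordal G) (hcf : ClawFree G)
    (m : ℕ) (hm : 3 ≤ m) (Fc : ℕ → Finset V)
    (hfac : ∀ k, 1 ≤ k → k ≤ m → IsMaximalCliqueF G (Fc k) ∧ (Fc k).card = 3)
    (hadj : ∀ k, 1 ≤ k → k < m → (Fc k ∩ Fc (k+1)).card = 2)
    (hinj : ∀ k l, 1 ≤ k → k < l → l ≤ m → Fc k ≠ Fc l) :
    ∃ q : ℕ → V, ∀ k, 1 ≤ k → k ≤ m → Fc k = {q k, q (k+1), q (k+2)} := by
  classical
  set e : ℕ → Finset V := fun k => Fc k ∩ Fc (k+1) with he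
  have hecard : ∀ k, 1 ≤ k → k ≤ m - 1 → (e k).card = 2 := by
    intro k h1 h2
    exact hadj k h1 (by omega)
  have hesubL : ∀ k, e k ⊆ Fc k := fun k => Finset.inter_subset_left
  have hesubR : ∀ k, e k ⊆ Fc (k+1) := fun k => Finset.inter_subset_right
  have hesubR' : ∀ k, 1 ≤ k → e (k-1) ⊆ Fc k := by
    intro k h1
    have := hesubR (k-1)
    rwa [show k-1+1 = k from by omega] at this
  have hene : ∀ k, 2 ≤ k → k ≤ m - 1 → e (k-1) ≠ e k := by
    intro k h2 h3 hcon
    obtain ⟨a, b, hab, hpair⟩ := Finset.card_eq_two.mp (hecard (k-1) (by omega) (by omega))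
    refine no_three_facets_on_edge hcf (hfac (k-1) (by omega) (by omega))
      (hfac k (by omega) (by omega)) (hfac (k+1) (by omega) (by omega))
      (hinj (k-1) k (by omega) (by omega) (by omega))
      (hinj (k-1) (k+1) (by omega) (by omega) (by omega))
      (hinj k (k+1) (by omega) (by omega) (by omega)) hab ?_ ?_ ?_
    · rw [← hpair]; exact hesubL (k-1)
    · rw [← hpair]; exact hesubR' k (by omega)
    · rw [← hpair, hcon]; exact hesubR k
  have hcex : ∀ k, 2 ≤ k → k ≤ m - 1 → ∃ v, e (k-1) ∩ e k = {v} := by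
    intro k h2 h3
    have hu : e (k-1) ∪ e k ⊆ Fc k :=
      Finset.union_subset (hesubR' k (by omega)) (hesubL k)
    have hcu : (e (k-1) ∪ e k).card ≤ 3 :=
      le_trans (Finset.card_le_card hu) (le_of_eq (hfac k (by omega) (by omega)).2)
    have hie := Finset.card_union_add_card_inter (e (k-1)) (e k)
    rw [hecard (k-1) (by omega) (by omega), hecard k (by omega) h3] at hie
    have hge1 : 1 ≤ (e (k-1) ∩ e k).card := by omega
    have hle1 : (e (k-1) ∩ e k).card ≤ 1 := by
      by_contra hcon
      push_neg at hcon
      have h1 : e (k-1) ∩ e k = e (k-1) := Finset.eq_of_subset_of_card_le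
        Finset.inter_subset_left (by rw [hecard (k-1) (by omega) (by omega)]; omega)
      have h2' : e (k-1) ∩ e k = e k := Finset.eq_of_subset_of_card_le
        Finset.inter_subset_right (by rw [hecard k (by omega) h3]; omega)
      exact hene k (by omega) h3 (h1.symm.trans h2')
    exact Finset.card_eq_one.mp (le_antisymm hle1 hge1)
  obtain ⟨v0, hv0⟩ := Finset.card_pos.mp
    (by rw [(hfac 1 le_rfl (by omega)).2]; norm_num : 0 < (Fc 1).card)
  have hctot : ∀ k, ∃ v, 2 ≤ k → k ≤ m - 1 → e (k-1) ∩ e k = {v} := by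
    intro k
    by_cases h : 2 ≤ k ∧ k ≤ m - 1
    · obtain ⟨v, hv⟩ := hcex k h.1 h.2
      exact ⟨v, fun _ _ => hv⟩
    · exact ⟨v0, fun h1 h2 => absurd ⟨h1, h2⟩ h⟩
  choose c hcspec using hctot
  have hcmemL : ∀ k, 2 ≤ k → k ≤ m - 1 → c k ∈ e (k-1) := by
    intro k h1 h2
    have : c k ∈ e (k-1) ∩ e k := by rw [hcspec k h1 h2]; simp
    exact (Finset.mem_inter.mp this).1
  have hcmemR : ∀ k, 2 ≤ k → k ≤ m - 1 → c k ∈ e k := by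
    intro k h1 h2
    have : c k ∈ e (k-1) ∩ e k := by rw [hcspec k h1 h2]; simp
    exact (Finset.mem_inter.mp this).2
  have spiral : ∀ k, 3 ≤ k → k ≤ m - 1 → c (k-1) ≠ c k := by
    intro k h3 h4 hcon
    have h1' := hcspec (k-1) (by omega) (by omega)
    rw [show k-1-1 = k-2 from by omega] at h1'
    have hv1 : c k ∈ e (k-2) := by
      have : c (k-1) ∈ e (k-2) ∩ e (k-1) := by rw [h1']; simp
      rw [hcon] at this
      exact (Finset.mem_inter.mp this).1
    have hv2 : c k ∈ e (k-1) := hcmemL k (by omega) h4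
    have hv3 : c k ∈ e k := hcmemR k (by omega) h4
    have m1 : c k ∈ Fc (k-2) := hesubL (k-2) hv1
    have m2 : c k ∈ Fc (k-1) := by
      have := hesubR (k-2) hv1
      rwa [show k-2+1 = k-1 from by omega] at this
    have m3 : c k ∈ Fc k := hesubL k hv3
    have m4 : c k ∈ Fc (k+1) := hesubR k hv3
    have i1 : (Fc (k-2) ∩ Fc (k-1)).card = 2 := by
      have := hadj (k-2) (by omega) (by omega)
      rwa [show k-2+1 = k-1 from by omega] at this
    have i2 : (Fc (k-1) ∩ Fc k).card = 2 := by
      have := hadj (k-1) (by omega) (by omega)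
      rwa [show k-1+1 = k from by omega] at this
    exact no_four_fan hch hcf (hfac (k-2) (by omega) (by omega))
      (hfac (k-1) (by omega) (by omega)) (hfac k (by omega) (by omega))
      (hfac (k+1) (by omega) (by omega))
      (hinj (k-2) (k-1) (by omega) (by omega) (by omega))
      (hinj (k-2) k (by omega) (by omega) (by omega))
      (hinj (k-2) (k+1) (by omega) (by omega) (by omega))
      (hinj (k-1) k (by omega) (by omega) (by omega))
      (hinj (k-1) (k+1) (by omega) (by omega) (by omega))
      (hinj k (k+1) (by omega) (by omega) (by omega))
      i1 i2 (hadj k (by omega) (by omega)) m1 m2 m3 m4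
  -- endpoints
  have hq1 : ∃ x, Fc 1 \ e 1 = {x} := by
    apply Finset.card_eq_one.mp
    rw [Finset.card_sdiff_of_subset (hesubL 1), (hfac 1 le_rfl (by omega)).2,
      hecard 1 le_rfl (by omega)]
  have hq2 : ∃ x, e 1 \ {c 2} = {x} := by
    apply Finset.card_eq_one.mp
    rw [Finset.card_sdiff_of_subset (by
      intro t ht
      simp only [Finset.mem_singleton] at ht
      subst ht
      exact hcmemL 2 le_rfl (by omega)), hecard 1 le_rfl (by omega)]
    simp
  have hqm1 : ∃ x, e (m-1) \ {c (m-1)} = {x} := by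
    apply Finset.card_eq_one.mp
    rw [Finset.card_sdiff_of_subset (by
      intro t ht
      simp only [Finset.mem_singleton] at ht
      subst ht
      exact hcmemR (m-1) (by omega) le_rfl), hecard (m-1) (by omega) le_rfl]
    simp
  have hqm2 : ∃ x, Fc m \ e (m-1) = {x} := by
    apply Finset.card_eq_one.mp
    rw [Finset.card_sdiff_of_subset (hesubR' m (by omega)), (hfac m (by omega) le_rfl).2,
      hecard (m-1) (by omega) le_rfl]
  obtain ⟨x1, hx1⟩ := hq1
  obtain ⟨x2, hx2⟩ := hq2
  obtain ⟨y1, hy1⟩ := hqm1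
  obtain ⟨y2, hy2⟩ := hqm2
  have hx1m : x1 ∈ Fc 1 ∧ x1 ∉ e 1 := by
    have : x1 ∈ Fc 1 \ e 1 := by rw [hx1]; simp
    exact Finset.mem_sdiff.mp this
  have hx2m : x2 ∈ e 1 ∧ x2 ≠ c 2 := by
    have : x2 ∈ e 1 \ {c 2} := by rw [hx2]; simp
    have h' := Finset.mem_sdiff.mp this
    simpa using h'
  have hy1m : y1 ∈ e (m-1) ∧ y1 ≠ c (m-1) := by
    have : y1 ∈ e (m-1) \ {c (m-1)} := by rw [hy1]; simp
    have h' := Finset.mem_sdiff.mp this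
    simpa using h'
  have hy2m : y2 ∈ Fc m ∧ y2 ∉ e (m-1) := by
    have : y2 ∈ Fc m \ e (m-1) := by rw [hy2]; simp
    exact Finset.mem_sdiff.mp this
  refine ⟨fun j => if j ≤ 1 then x1 else if j = 2 then x2 else if j ≤ m then c (j-1)
    else if j = m+1 then y1 else y2, ?_⟩
  set q : ℕ → V := fun j => if j ≤ 1 then x1 else if j = 2 then x2 else if j ≤ m then c (j-1)
    else if j = m+1 then y1 else y2 with hqdef
  have qv1 : q 1 = x1 := by simp [hqdef]
  have qv2 : q 2 = x2 := by simp [hqdef]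
  have qvc : ∀ j, 3 ≤ j → j ≤ m → q j = c (j-1) := by
    intro j h1 h2
    simp only [hqdef]
    rw [if_neg (by omega), if_neg (by omega), if_pos h2]
  have qvm1 : q (m+1) = y1 := by
    simp only [hqdef]
    rw [if_neg (by omega), if_neg (by omega), if_neg (by omega)]
    simp
  have qvm2 : q (m+2) = y2 := by
    simp only [hqdef]
    rw [if_neg (by omega), if_neg (by omega), if_neg (by omega), if_neg (by omega)]
  -- the two boundary edges of each interior facet
  have epairL : ∀ t, 2 ≤ t → t ≤ m - 1 → e (t-1) = {q t, q (t+1)} := by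
    intro t h1 h2
    have hc1 : q (t+1) = c t := qvc (t+1) (by omega) (by omega)
    rcases (show t = 2 ∨ 3 ≤ t from by omega) with rfl | h3
    · rw [qv2, hc1]
      exact pair_eq (hecard 1 le_rfl (by omega)) hx2m.1 (hcmemL 2 le_rfl (by omega)) hx2m.2
    · rw [qvc t h3 (by omega), hc1]
      exact pair_eq (hecard (t-1) (by omega) (by omega))
        (hcmemR (t-1) (by omega) (by omega))
        (hcmemL t (by omega) h2) (spiral t h3 h2)
  have epairR : ∀ t, 2 ≤ t → t ≤ m - 1 → e t = {q (t+1), q (t+2)} := by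
    intro t h1 h2
    have hc1 : q (t+1) = c t := qvc (t+1) (by omega) (by omega)
    rcases (show t = m - 1 ∨ t ≤ m - 2 from by omega) with h3 | h3
    · subst h3
      have e1 : m - 1 + 1 = m := by omega
      have e2 : m - 1 + 2 = m + 1 := by omega
      rw [e2, qvm1, hc1]
      exact pair_eq (hecard (m-1) (by omega) le_rfl) (hcmemR (m-1) (by omega) le_rfl)
        hy1m.1 (fun h => hy1m.2 h.symm)
    · have hc2 : q (t+2) = c (t+1) := qvc (t+2) (by omega) (by omega)
      rw [hc1, hc2]
      exact pair_eq (hecard t (by omega) (by omega)) (hcmemR t h1 h2)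
        (hcmemL (t+1) (by omega) (by omega))
        (spiral (t+1) (by omega) (by omega))
  intro t h1 h2
  rcases (show t = 1 ∨ (2 ≤ t ∧ t ≤ m - 1) ∨ t = m from by omega) with rfl | ⟨h3, h4⟩ | ht
  · -- t = 1
    have he1 : e 1 = {q 2, q 3} := by
      have := epairL 2 le_rfl (by omega)
      rwa [show (2:ℕ)-1 = 1 from rfl, show (2:ℕ)+1 = 3 from rfl] at this
    have : Fc 1 = (Fc 1 \ e 1) ∪ e 1 := (Finset.sdiff_union_of_subset (hesubL 1)).symm
    rw [this, hx1, he1, qv1]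
    ext w
    simp only [Finset.mem_union, Finset.mem_insert, Finset.mem_singleton,
      show (1:ℕ)+1 = 2 from rfl, show (1:ℕ)+2 = 3 from rfl]
    try tauto
  · -- interior
    have heL := epairL t h3 h4
    have heR := epairR t h3 h4
    have hsub : ({q t, q (t+1), q (t+2)} : Finset V) ⊆ Fc t := by
      intro w hw
      simp only [Finset.mem_insert, Finset.mem_singleton] at hw
      rcases hw with rfl | rfl | rfl
      · exact hesubR' t (by omega) (by rw [heL]; simp)
      · exact hesubL t (by rw [heR]; simp)
      · exact hesubL t (by rw [heR]; simp)
    have hne12 : q t ≠ q (t+1) := by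
      intro hcon
      have : (e (t-1)).card = 2 := hecard (t-1) (by omega) (by omega)
      rw [heL, hcon] at this
      simp at this
    have hne23 : q (t+1) ≠ q (t+2) := by
      intro hcon
      have : (e t).card = 2 := hecard t (by omega) h4
      rw [heR, hcon] at this
      simp at this
    have hne13 : q t ≠ q (t+2) := by
      intro hcon
      apply hene t h3 h4
      rw [heL, heR, hcon]
      exact Finset.pair_comm (q (t+2)) (q (t+1))
    symm
    apply Finset.eq_of_subset_of_card_le hsub
    rw [(hfac t h1 h2).2]
    rw [Finset.card_eq_three.mpr ⟨q t, q (t+1), q (t+2), hne12, hne13, hne23, rfl⟩]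
  · -- t = m
    subst ht
    have heL : e (t-1) = {q t, q (t+1)} := by
      rw [qvc t (by omega) le_rfl, qvm1]
      exact pair_eq (hecard (t-1) (by omega) le_rfl) (hcmemR (t-1) (by omega) le_rfl)
        hy1m.1 (fun h => hy1m.2 h.symm)
    have hsd : Fc t = (Fc t \ e (t-1)) ∪ e (t-1) :=
      (Finset.sdiff_union_of_subset (hesubR' t (by omega))).symm
    rw [hsd, hy2, heL, qvm2]
    ext w
    simp only [Finset.mem_union, Finset.mem_insert, Finset.mem_singleton]
    try tauto


end CliqueTools

section ChainTools
variable {V : Type*} [Fintype V] [DecidableEq V] {G : SimpleGraph V}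

lemma chain_cover (hch : IsChordal G) (hcf : ClawFree G)
    (hno : NoInducedCopy G threeTriangles)
    (D : Set (Finset V)) (hD : ∀ F ∈ D, IsMaximalCliqueF G F ∧ F.card = 3)
    (hconn : Codim1Conn D) (hne : D.Nonempty) :
    ∃ L : List (Finset V), (∀ F ∈ L, F ∈ D) ∧ L.Nodup ∧
      L.Chain' (fun X Y => (X ∩ Y).card = 2) ∧ 1 ≤ L.length ∧ ∀ F ∈ D, F ∈ L := by
  classical
  set R : Finset V → Finset V → Prop := fun X Y => (X ∩ Y).card = 2 with hR
  set P : ℕ → Prop := fun n => ∃ L : List (Finset V),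
    (∀ F ∈ L, F ∈ D) ∧ L.Nodup ∧ L.Chain' R ∧ L.length = n with hP
  set N := Fintype.card (Finset V) with hN
  obtain ⟨F0, hF0⟩ := hne
  have hP1 : P 1 := ⟨[F0], by simpa using hF0, by simp, List.isChain_singleton F0, rfl⟩
  have hbound : ∀ n, P n → n ≤ N := by
    rintro n ⟨L, _, hnd, _, hlen⟩
    rw [← hlen]
    exact hnd.length_le_card
  set mx := Nat.findGreatest P N with hmx
  have hPmx : P mx := Nat.findGreatest_spec (hbound 1 hP1) hP1
  have hmax : ∀ n, P n → n ≤ mx := fun n hn => Nat.le_findGreatest (hbound n hn) hn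
  obtain ⟨L, hLD, hLnd, hLch, hLlen⟩ := hPmx
  have hm1 : 1 ≤ mx := hmax 1 hP1
  -- key: no facet outside L is R-adjacent to a member of L
  have key : ∀ X ∈ L, ∀ Y ∈ D, Y ∉ L → R Y X → False := by
    intro X hX Y hYD hYL hadjYX
    obtain ⟨idx, hidx⟩ := List.mem_iff_get.mp hX
    by_cases h0 : (idx : ℕ) = 0
    · -- prepend
      have hcons : P (mx + 1) := by
        refine ⟨Y :: L, ?_, ?_, ?_, by simp [hLlen]⟩
        · intro F hF
          rcases List.mem_cons.mp hF with rfl | hF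
          · exact hYD
          · exact hLD F hF
        · exact List.nodup_cons.mpr ⟨hYL, hLnd⟩
        · unfold List.Chain'; rw [List.isChain_cons]
          refine ⟨?_, hLch⟩
          intro z hz
          have hLne' : L ≠ [] := by
            intro hnil; rw [hnil] at hLlen; simp at hLlen; omega
          have hz' : L.head hLne' = z := by
            rw [List.head?_eq_head hLne'] at hz
            simpa using hz
          have hidx0 : idx = ⟨0, by omega⟩ := Fin.ext h0
          rw [hidx0] at hidx
          have hx0 : L.head hLne' = X := by
            rw [← hidx, List.head_eq_getElem_zero hLne', List.get_eq_getElem]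
          rw [← hz', hx0]
          exact hadjYX
      have := hmax (mx + 1) hcons
      omega
    · by_cases hlast : (idx : ℕ) = L.length - 1
      · -- append
        have hcons : P (mx + 1) := by
          refine ⟨L ++ [Y], ?_, ?_, ?_, by simp [hLlen]⟩
          · intro F hF
            rcases List.mem_append.mp hF with hF | hF
            · exact hLD F hF
            · simp at hF; subst hF; exact hYD
          · rw [List.nodup_append]
            exact ⟨hLnd, by simp, by intro a ha b hb h; simp at hb; subst hb; subst h; exact hYL ha⟩
          · unfold List.Chain'; rw [List.isChain_append]
            refine ⟨hLch, List.isChain_singleton Y, ?_⟩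
            intro x hx y hy
            simp only [List.head?_cons, Option.mem_some_iff] at hy
            subst hy
            have hLne' : L ≠ [] := by
              intro hnil; rw [hnil] at hLlen; simp at hLlen; omega
            have hxX : x = X := by
              rw [List.getLast?_eq_getLast hLne'] at hx
              simp only [Option.mem_some_iff] at hx
              subst hx
              have hidx0 : idx = ⟨L.length - 1, by omega⟩ := Fin.ext hlast
              rw [hidx0] at hidx
              rw [← hidx, List.getLast_eq_getElem, List.get_eq_getElem]
            show (x ∩ Y).card = 2
            rw [hxX, Finset.inter_comm]
            exact hadjYX
        have := hmax (mx + 1) hcons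
        omega
      · -- interior : branching contradiction
        have hil : (idx : ℕ) < L.length := idx.2
        have hi1 : 1 ≤ (idx : ℕ) := by omega
        have hi2 : (idx : ℕ) + 1 < L.length := by omega
        set A := L.get ⟨(idx : ℕ) - 1, by omega⟩ with hA
        set B := L.get ⟨(idx : ℕ) + 1, by omega⟩ with hB
        have hchain := List.isChain_iff_getElem.mp hLch
        have hAX : R A X := by
          have := hchain ((idx : ℕ) - 1) (by omega)
          rw [← hidx]
          rw [hA]
          convert this using 3
          omega
          rw [List.get_eq_getElem]; congr 1; omega
        have hXB : R X B := by
          have := hchain (idx : ℕ) (by omega)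
          rw [← hidx, hB]
          exact this
        have hAB : A ≠ B := by
          intro hcon
          have := hLnd.get_inj_iff.mp hcon
          simp only [Fin.mk.injEq] at this
          omega
        have hAY : A ≠ Y := fun h => hYL (h ▸ List.get_mem L _)
        have hBY : B ≠ Y := fun h => hYL (h ▸ List.get_mem L _)
        have hXD := hD X (hLD X hX)
        have hAD := hD A (hLD A (List.get_mem L _))
        have hBD := hD B (hLD B (List.get_mem L _))
        have hYD' := hD Y hYD
        exact no_branching hch hcf hno hXD.1 hXD.2 hAD.1 hAD.2 hBD.1 hBD.2
          hYD'.1 hYD'.2 hAB hAY hBY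
          (by rw [Finset.inter_comm]; exact hAX) hXB
          (by rw [Finset.inter_comm]; exact hadjYX)
  refine ⟨L, hLD, hLnd, hLch, by omega, ?_⟩
  intro F hF
  by_contra hFL
  have hLne : L ≠ [] := by intro hnil; rw [hnil] at hLlen; simp at hLlen; omega
  have hX0 : L.head hLne ∈ L := List.head_mem hLne
  obtain ⟨t, c, hc0, hclast, hcD, hcadj⟩ := hconn F hF (L.head hLne) (hLD _ hX0)
  have hnot : ∀ n (hn : n < t + 1), c ⟨n, hn⟩ ∉ L := by
    intro n
    induction n with
    | zero => intro hn; rw [show (⟨0, hn⟩ : Fin (t+1)) = 0 from rfl, hc0]; exact hFL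
    | succ n ihn =>
      intro hn hmem
      have hprev : c ⟨n, by omega⟩ ∉ L := ihn (by omega)
      have hadj' := hcadj ⟨n, by omega⟩
      have hcs : (⟨n, by omega⟩ : Fin t).castSucc = ⟨n, by omega⟩ := rfl
      have hss : (⟨n, by omega⟩ : Fin t).succ = ⟨n+1, hn⟩ := rfl
      rw [hcs, hss] at hadj'
      exact key (c ⟨n+1, hn⟩) hmem (c ⟨n, by omega⟩) (hcD _) hprev hadj'
  have := hnot t (by omega)
  rw [show (⟨t, by omega⟩ : Fin (t+1)) = Fin.last t from rfl, hclast] at this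
  exact this hX0


end ChainTools

end Stmt17

/-- Let `G` be a chordal, claw-free graph with Koszul binomial edge
ideal, containing no induced copy of the triangle configuration of the non-Koszul
example, and let `D` be a set of 2-dimensional facets of the clique complex `Δ(G)`
which is connected in codimension 1.  Then the 1-skeleton of `D` is a 2-dimensional
line graph: its facets are exactly the consecutive triples `{i, i+1, i+2}`,
`i = 1, …, m`, under a suitable relabeling `f` of the vertices of `D`. -/
theorem stmt_17 {K : Type*} [Field K] {V : Type*} [Fintype V] [DecidableEq V]
    (G : SimpleGraph V) (hch : IsChordal G) (hcf : ClawFree G)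
    (hkoszul : GraphKoszul K G)
    (hno : NoInducedCopy G threeTriangles)
    (D : Set (Finset V)) (hD : ∀ F ∈ D, IsMaximalCliqueF G F ∧ F.card = 3)
    (hconn : Codim1Conn D) (hne : D.Nonempty) :
    ∃ (m : ℕ) (f : V → ℕ), 1 ≤ m ∧
      Set.InjOn f (⋃ F ∈ D, (↑F : Set V)) ∧
      (∀ F ∈ D, ∃ i, 1 ≤ i ∧ i ≤ m ∧ F.image f = {i, i + 1, i + 2}) ∧
      (∀ i, 1 ≤ i → i ≤ m → ∃ F ∈ D, F.image f = {i, i + 1, i + 2}) := by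
  classical
  obtain ⟨L, hLD, hLnd, hLch, hLlen, hLcov⟩ :=
    Stmt17.chain_cover hch hcf hno D hD hconn hne
  set m := L.length with hmdef
  set Fc : ℕ → Finset V := fun k => L.getD (k-1) ∅ with hFc
  have hFcget : ∀ k (h1 : 1 ≤ k) (h2 : k ≤ m), Fc k = L.get ⟨k-1, by omega⟩ := by
    intro k h1 h2
    show L.getD (k-1) ∅ = _
    rw [List.getD_eq_getElem L ∅ (by omega : k-1 < L.length), List.get_eq_getElem]
  have hmemD : ∀ k, 1 ≤ k → k ≤ m → Fc k ∈ D := by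
    intro k h1 h2
    rw [hFcget k h1 h2]
    exact hLD _ (List.get_mem _ _)
  have hfac : ∀ k, 1 ≤ k → k ≤ m → IsMaximalCliqueF G (Fc k) ∧ (Fc k).card = 3 :=
    fun k h1 h2 => hD _ (hmemD k h1 h2)
  have hadjc : ∀ k, 1 ≤ k → k < m → (Fc k ∩ Fc (k+1)).card = 2 := by
    intro k h1 h2
    rw [hFcget k h1 (by omega), hFcget (k+1) (by omega) (by omega)]
    have hc := List.isChain_iff_getElem.mp hLch (k-1) (by omega)
    have e1 : (⟨k-1+1, by omega⟩ : Fin L.length) = ⟨k, by omega⟩ := Fin.mk_eq_mk.mpr (by omega)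
    simp only [List.get_eq_getElem, show k+1-1 = k-1+1 from by omega]
    exact hc
  have hinjc : ∀ k l, 1 ≤ k → k < l → l ≤ m → Fc k ≠ Fc l := by
    intro k l h1 h2 h3 hcon
    rw [hFcget k h1 (by omega), hFcget l (by omega) h3] at hcon
    have := hLnd.get_inj_iff.mp hcon
    simp only [Fin.mk.injEq] at this
    omega
  have hcov : ∀ F ∈ D, ∃ k, 1 ≤ k ∧ k ≤ m ∧ Fc k = F := by
    intro F hF
    obtain ⟨idx, hidx⟩ := List.mem_iff_get.mp (hLcov F hF)
    refine ⟨(idx : ℕ) + 1, by omega, by have := idx.2; omega, ?_⟩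
    rw [hFcget ((idx : ℕ)+1) (by omega) (by have := idx.2; omega)]
    have e1 : (⟨(idx : ℕ)+1-1, by omega⟩ : Fin L.length) = idx := Fin.ext (by simp)
    rw [e1]
    exact hidx
  have hm1 : 1 ≤ m := hLlen
  have hq : ∃ q : ℕ → V, ∀ k, 1 ≤ k → k ≤ m → Fc k = {q k, q (k+1), q (k+2)} := by
    rcases (show m = 1 ∨ m = 2 ∨ 3 ≤ m from by omega) with h | h | h
    · obtain ⟨x, y, z, nxy, nxz, nyz, hFeq⟩ :=
        Finset.card_eq_three.mp (hfac 1 le_rfl (by omega)).2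
      refine ⟨fun j => if j = 1 then x else if j = 2 then y else z, ?_⟩
      intro k h1 h2
      have hk : k = 1 := by omega
      subst hk
      rw [hFeq]
      norm_num
    · have he2 := hadjc 1 le_rfl (by omega)
      obtain ⟨x, hx1, hx2⟩ := Stmt17.third_vertex (hfac 1 le_rfl (by omega)).2 he2
        Finset.inter_subset_left
      obtain ⟨y, hy1, hy2⟩ := Stmt17.third_vertex (hfac 2 (by omega) (by omega)).2 he2
        Finset.inter_subset_right
      obtain ⟨a, b, hab, hpair⟩ := Finset.card_eq_two.mp he2
      refine ⟨fun j => if j = 1 then x else if j = 2 then a else if j = 3 then b else y, ?_⟩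
      intro k h1 h2
      rcases (show k = 1 ∨ k = 2 from by omega) with rfl | rfl
      · rw [hx2, hpair]
        norm_num
      · rw [hy2, hpair]
        norm_num
        ext w
        simp only [Finset.mem_insert, Finset.mem_singleton]
        tauto
    · exact Stmt17.build_q hch hcf m h Fc hfac hadjc hinjc
  obtain ⟨q, htr⟩ := hq
  have hqinj := Stmt17.distinct_ladder hch hcf m hm1 Fc q hfac hinjc htr
  set f : V → ℕ := fun v => if h : ∃ j, 1 ≤ j ∧ j ≤ m+2 ∧ q j = v then h.choose else 0
    with hf
  have hfq : ∀ j, 1 ≤ j → j ≤ m+2 → f (q j) = j := by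
    intro j h1 h2
    have hex : ∃ j', 1 ≤ j' ∧ j' ≤ m+2 ∧ q j' = q j := ⟨j, h1, h2, rfl⟩
    rw [hf]
    simp only [dif_pos hex]
    obtain ⟨c1, c2, c3⟩ := hex.choose_spec
    by_contra hne'
    rcases Nat.lt_or_ge hex.choose j with hlt | hge
    · exact absurd c3 (hqinj hex.choose j c1 hlt h2)
    · exact absurd c3.symm (hqinj j hex.choose h1 (by omega) c2)
  have hrep : ∀ v, v ∈ (⋃ F ∈ D, (↑F : Set V)) → ∃ j, 1 ≤ j ∧ j ≤ m + 2 ∧ q j = v := by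
    intro v hv
    simp only [Set.mem_iUnion] at hv
    obtain ⟨F, hF, hvF⟩ := hv
    obtain ⟨k, hk1, hk2, hkF⟩ := hcov F hF
    rw [← hkF, htr k hk1 hk2] at hvF
    simp only [Finset.coe_insert, Set.mem_insert_iff, Finset.coe_singleton,
      Set.mem_singleton_iff] at hvF
    rcases hvF with rfl | rfl | rfl
    · exact ⟨k, hk1, by omega, rfl⟩
    · exact ⟨k+1, by omega, by omega, rfl⟩
    · exact ⟨k+2, by omega, by omega, rfl⟩
  refine ⟨m, f, hm1, ?_, ?_, ?_⟩
  · intro v hv w hw hvw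
    obtain ⟨j, hj1, hj2, rfl⟩ := hrep v hv
    obtain ⟨j', hj1', hj2', rfl⟩ := hrep w hw
    rw [hfq j hj1 hj2, hfq j' hj1' hj2'] at hvw
    rw [hvw]
  · intro F hF
    obtain ⟨k, h1, h2, hkF⟩ := hcov F hF
    refine ⟨k, h1, h2, ?_⟩
    rw [← hkF, htr k h1 h2]
    rw [Finset.image_insert, Finset.image_insert, Finset.image_singleton,
      hfq k h1 (by omega), hfq (k+1) (by omega) (by omega), hfq (k+2) (by omega) (by omega)]
  · intro i h1 h2
    refine ⟨Fc i, hmemD i h1 h2, ?_⟩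
    rw [htr i h1 h2]
    rw [Finset.image_insert, Finset.image_insert, Finset.image_singleton,
      hfq i h1 (by omega), hfq (i+1) (by omega) (by omega), hfq (i+2) (by omega) (by omega)]
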